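/- European Delta formula: For the exponential Lévy model X_T = x exp(X̃_T) and any Φ ∈ C¹(ℝ) with bounded derivative, ∂/∂x E[e^{−rT} Φ(X_T)] = (e^{−rT}/(xσT)) E[Φ(X_T) W_T]. -/

import Mathlib

open MeasureTheory ProbabilityTheory Real Filter Set
open scoped NNReal ENNReal

namespace EDelta

lemma gauss_int {v : ℝ≥0} (hv : v ≠ 0) (h : ℝ → ℝ) :
    ∫ w, h w ∂(gaussianReal 0 v) = ∫ w, gaussianPDFReal 0 v w * h w := by
  rw [gaussianReal_of_var_ne_zero _ hv]
  have hd : gaussianPDF 0 v = fun w => ((Real.toNNReal (gaussianPDFReal 0 v w) : ℝ≥0) : ℝ≥0∞) := by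
    funext w; simp [gaussianPDF, ENNReal.ofReal]
  rw [hd, integral_withDensity_eq_integral_smul (measurable_gaussianPDFReal 0 v).real_toNNReal]
  congr 1
  funext w
  rw [NNReal.smul_def, Real.coe_toNNReal _ (gaussianPDFReal_nonneg 0 v w), smul_eq_mul]

lemma gauss_integrable_iff {v : ℝ≥0} (hv : v ≠ 0) {h : ℝ → ℝ} :
    Integrable h (gaussianReal 0 v) ↔
      Integrable (fun w => h w * gaussianPDFReal 0 v w) (volume : Measure ℝ) := by
  rw [gaussianReal_of_var_ne_zero _ hv, gaussianPDF_def,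
    integrable_withDensity_iff (measurable_gaussianPDFReal 0 v).ennreal_ofReal
      (Filter.Eventually.of_forall fun w => ENNReal.ofReal_lt_top)]
  simp_rw [ENNReal.toReal_ofReal (gaussianPDFReal_nonneg 0 v _)]

lemma pdf_hasDeriv {v : ℝ≥0} (hv : v ≠ 0) (w : ℝ) :
    HasDerivAt (fun w => (v : ℝ) * gaussianPDFReal 0 v w) (-(w * gaussianPDFReal 0 v w)) w := by
  have hvpos : (0:ℝ) < v := by exact_mod_cast pos_iff_ne_zero.mpr hv
  have h1 : HasDerivAt (fun w : ℝ => -(w - 0)^2/(2*(v:ℝ))) (-w/(v:ℝ)) w := by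
    have h := (((hasDerivAt_id w).sub_const (0:ℝ)).pow 2).neg.div_const (2*(v:ℝ))
    refine h.congr_deriv ?_
    field_simp
    simp
  have h3 := (h1.exp).const_mul ((v:ℝ) * (Real.sqrt (2 * π * (v:ℝ)))⁻¹)
  have hfun : (fun w : ℝ => (v:ℝ) * gaussianPDFReal 0 v w)
      = fun y => (v:ℝ) * (Real.sqrt (2 * π * (v:ℝ)))⁻¹ * rexp (-(y - 0)^2/(2*(v:ℝ))) := by
    funext y; unfold gaussianPDFReal; push_cast; ring
  have hval : -(w * gaussianPDFReal 0 v w)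
      = (v:ℝ) * (Real.sqrt (2 * π * (v:ℝ)))⁻¹ * (rexp (-(w - 0)^2/(2*(v:ℝ))) * (-w / (v:ℝ))) := by
    unfold gaussianPDFReal
    field_simp
  rw [hfun, hval]
  exact h3

end EDelta

namespace EDelta

lemma stein {v : ℝ≥0} (hv : v ≠ 0) {g g' : ℝ → ℝ} (hg : ∀ w, HasDerivAt g (g' w) w)
    (h0 : Integrable g (gaussianReal 0 v))
    (h1 : Integrable (fun w => g w * w) (gaussianReal 0 v))
    (h2 : Integrable g' (gaussianReal 0 v)) :
    ∫ w, g w * w ∂(gaussianReal 0 v) = (v : ℝ) * ∫ w, g' w ∂(gaussianReal 0 v) := by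
  set p : ℝ → ℝ := gaussianPDFReal 0 v with hp
  have key := integral_mul_deriv_eq_deriv_mul_of_integrable
    (u := g) (u' := g') (v := fun w => (v:ℝ) * p w) (v' := fun w => -(w * p w))
    (fun w _ => hg w) (fun w _ => pdf_hasDeriv hv w) ?_ ?_ ?_
  · rw [gauss_int hv, gauss_int hv]
    have e1 : ∫ w, g w * -(w * p w) = - ∫ w, p w * (g w * w) := by
      rw [← integral_neg]; congr 1; funext w; ring
    have e2 : ∫ w, g' w * ((v:ℝ) * p w) = (v:ℝ) * ∫ w, p w * g' w := by
      rw [← integral_const_mul]; congr 1; funext w; ring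
    rw [e1, e2] at key
    linarith [key]
  · have h1' := (gauss_integrable_iff hv).mp h1
    have h : (g * fun w => -(w * p w)) = fun w => -((g w * w) * p w) := by
      funext w; simp [Pi.mul_apply]; ring
    rw [h]
    exact h1'.neg
  · have h2' := ((gauss_integrable_iff hv).mp h2).const_mul (v:ℝ)
    have h : (g' * fun w => (v:ℝ) * p w) = fun w => (v:ℝ) * (g' w * p w) := by
      funext w; simp [Pi.mul_apply]; ring
    rw [h]
    exact h2'
  · have h0' := ((gauss_integrable_iff hv).mp h0).const_mul (v:ℝ)
    have h : (g * fun w => (v:ℝ) * p w) = fun w => (v:ℝ) * (g w * p w) := by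
      funext w; simp [Pi.mul_apply]; ring
    rw [h]
    exact h0'


lemma vol_exp_gauss {b : ℝ} (hb : 0 < b) (a : ℝ) :
    Integrable (fun w => rexp (a * w) * rexp (-b * w ^ 2)) (volume : Measure ℝ) := by
  have h := ((integrable_exp_neg_mul_sq hb).comp_sub_right (a / (2 * b))).const_mul
    (rexp (a ^ 2 / (4 * b)))
  apply h.congr
  filter_upwards with w
  rw [← Real.exp_add, ← Real.exp_add]
  congr 1
  field_simp
  ring

lemma vol_exp_abs_gauss {b : ℝ} (hb : 0 < b) (a : ℝ) :
    Integrable (fun w => rexp (a * w) * |w| * rexp (-b * w ^ 2)) (volume : Measure ℝ) := by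
  have hB : Integrable (fun w => rexp ((a + 1) * w) * rexp (-b * w ^ 2)
      + rexp ((a - 1) * w) * rexp (-b * w ^ 2)) (volume : Measure ℝ) :=
    (vol_exp_gauss hb (a + 1)).add (vol_exp_gauss hb (a - 1))
  refine hB.mono ?_ ?_
  · exact (((Real.continuous_exp.comp (continuous_const.mul continuous_id)).mul
      continuous_abs).mul
      (Real.continuous_exp.comp ((continuous_const.mul (continuous_pow 2))))).aestronglyMeasurable
  · filter_upwards with w
    have h1 : |w| ≤ rexp w + rexp (-w) := by
      rcases abs_cases w with ⟨h, _⟩ | ⟨h, _⟩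
      · rw [h]
        nlinarith [Real.add_one_le_exp w, Real.exp_pos (-w)]
      · rw [h]
        nlinarith [Real.add_one_le_exp (-w), Real.exp_pos w]
    have h2 : rexp (a * w) * |w| ≤ rexp ((a + 1) * w) + rexp ((a - 1) * w) := by
      calc rexp (a * w) * |w| ≤ rexp (a * w) * (rexp w + rexp (-w)) := by
            exact mul_le_mul_of_nonneg_left h1 (Real.exp_pos _).le
        _ = rexp ((a + 1) * w) + rexp ((a - 1) * w) := by
            rw [mul_add, ← Real.exp_add, ← Real.exp_add]
            ring_nf
    have hg0 : (0:ℝ) ≤ rexp ((a + 1) * w) * rexp (-b * w ^ 2)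
        + rexp ((a - 1) * w) * rexp (-b * w ^ 2) := by positivity
    rw [Real.norm_eq_abs, Real.norm_eq_abs, abs_of_nonneg (by positivity), abs_of_nonneg hg0]
    have h3 := mul_le_mul_of_nonneg_right h2 (Real.exp_pos (-b * w ^ 2)).le
    calc rexp (a * w) * |w| * rexp (-b * w ^ 2)
        ≤ (rexp ((a + 1) * w) + rexp ((a - 1) * w)) * rexp (-b * w ^ 2) := h3
      _ = rexp ((a + 1) * w) * rexp (-b * w ^ 2) + rexp ((a - 1) * w) * rexp (-b * w ^ 2) := by
          ring

lemma gauss_exp_integrable {v : ℝ≥0} (hv : v ≠ 0) (a : ℝ) :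
    Integrable (fun w => rexp (a * w)) (gaussianReal 0 v) := by
  have hvpos : (0:ℝ) < v := by exact_mod_cast pos_iff_ne_zero.mpr hv
  have hb : (0:ℝ) < (2 * (v:ℝ))⁻¹ := by positivity
  rw [gauss_integrable_iff hv]
  have h := (vol_exp_gauss hb a).const_mul ((Real.sqrt (2 * π * (v:ℝ)))⁻¹)
  apply h.congr
  filter_upwards with w
  unfold gaussianPDFReal
  rw [show -(w - 0) ^ 2 / (2 * (v:ℝ)) = -(2 * (v:ℝ))⁻¹ * w ^ 2 by ring]
  ring

lemma gauss_exp_abs_integrable {v : ℝ≥0} (hv : v ≠ 0) (a : ℝ) :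
    Integrable (fun w => rexp (a * w) * |w|) (gaussianReal 0 v) := by
  have hvpos : (0:ℝ) < v := by exact_mod_cast pos_iff_ne_zero.mpr hv
  have hb : (0:ℝ) < (2 * (v:ℝ))⁻¹ := by positivity
  rw [gauss_integrable_iff hv]
  have h := (vol_exp_abs_gauss hb a).const_mul ((Real.sqrt (2 * π * (v:ℝ)))⁻¹)
  apply h.congr
  filter_upwards with w
  unfold gaussianPDFReal
  rw [show -(w - 0) ^ 2 / (2 * (v:ℝ)) = -(2 * (v:ℝ))⁻¹ * w ^ 2 by ring]
  ring


lemma phi_bound {Φ : ℝ → ℝ} (hΦ : ContDiff ℝ 1 Φ) {C : ℝ} (hC : ∀ y, |deriv Φ y| ≤ C) (y : ℝ) :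
    |Φ y| ≤ |Φ 0| + C * |y| := by
  have hC0 : 0 ≤ C := le_trans (abs_nonneg _) (hC 0)
  have hl : LipschitzWith C.toNNReal Φ := by
    refine lipschitzWith_of_nnnorm_deriv_le (hΦ.differentiable one_ne_zero) fun y => ?_
    rw [← NNReal.coe_le_coe, coe_nnnorm, Real.norm_eq_abs, Real.coe_toNNReal _ hC0]
    exact hC y
  have := hl.dist_le_mul y 0
  rw [Real.dist_eq, Real.dist_eq, sub_zero, Real.coe_toNNReal _ hC0] at this
  calc |Φ y| ≤ |Φ y - Φ 0| + |Φ 0| := by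
        have := abs_sub_abs_le_abs_sub (Φ y) (Φ 0); linarith [abs_nonneg (Φ y - Φ 0)]
    _ ≤ |Φ 0| + C * |y| := by linarith

lemma key_stein {v : ℝ≥0} (hv : v ≠ 0) {Φ : ℝ → ℝ} (hΦ : ContDiff ℝ 1 Φ)
    {C : ℝ} (hC : ∀ y, |deriv Φ y| ≤ C) (x σ c j : ℝ) :
    ∫ w, Φ (x * rexp (c + σ * w + j)) * w ∂(gaussianReal 0 v)
      = (v:ℝ) * ∫ w, deriv Φ (x * rexp (c + σ * w + j)) * (x * σ * rexp (c + σ * w + j))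
          ∂(gaussianReal 0 v) := by
  have hC0 : 0 ≤ C := le_trans (abs_nonneg _) (hC 0)
  set m : ℝ → ℝ := fun w => x * rexp (c + σ * w + j) with hm
  have hmc : Continuous m := by fun_prop
  have hΦc : Continuous Φ := hΦ.continuous
  have hdΦc : Continuous (deriv Φ) := hΦ.continuous_deriv le_rfl
  have hg : ∀ w, HasDerivAt (fun w => Φ (m w))
      (deriv Φ (m w) * (x * σ * rexp (c + σ * w + j))) w := by
    intro w
    have hinner : HasDerivAt m (x * σ * rexp (c + σ * w + j)) w := by
      have hlin : HasDerivAt (fun w : ℝ => c + σ * w + j) σ w := by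
        have h1 : HasDerivAt (fun w : ℝ => σ * w) (σ * 1) w := (hasDerivAt_id w).const_mul σ
        simpa using (h1.const_add c).add_const j
      have := ((hlin.exp).const_mul x)
      refine this.congr_deriv ?_
      ring
    exact ((hΦ.differentiable one_ne_zero (m w)).hasDerivAt).comp w hinner
  -- expfac : m w = x * rexp (c + j) * rexp (σ * w)
  have hexp : ∀ w : ℝ, rexp (c + σ * w + j) = rexp (c + j) * rexp (σ * w) := by
    intro w; rw [← Real.exp_add]; ring_nf
  have h0 : Integrable (fun w => Φ (m w)) (gaussianReal 0 v) := by
    have hint : Integrable (fun w => |Φ 0| + C * (|x| * rexp (c + j)) * rexp (σ * w))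
        (gaussianReal 0 v) :=
      (integrable_const _).add (((gauss_exp_integrable hv σ)).const_mul _)
    refine hint.mono (hΦc.comp hmc).aestronglyMeasurable ?_
    filter_upwards with w
    rw [Real.norm_eq_abs, Real.norm_eq_abs]
    refine le_trans ?_ (le_abs_self _)
    have hb := phi_bound hΦ hC (m w)
    have hmw : |m w| = |x| * rexp (c + j) * rexp (σ * w) := by
      rw [hm, abs_mul, abs_of_pos (Real.exp_pos _), hexp w]; ring
    rw [hmw] at hb
    calc |Φ (m w)| ≤ |Φ 0| + C * (|x| * rexp (c + j) * rexp (σ * w)) := hb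
      _ = |Φ 0| + C * (|x| * rexp (c + j)) * rexp (σ * w) := by ring
  have h1 : Integrable (fun w => Φ (m w) * w) (gaussianReal 0 v) := by
    have hint : Integrable (fun w => |Φ 0| * (rexp (0 * w) * |w|)
        + C * (|x| * rexp (c + j)) * (rexp (σ * w) * |w|)) (gaussianReal 0 v) :=
      ((gauss_exp_abs_integrable hv 0).const_mul _).add
        ((gauss_exp_abs_integrable hv σ).const_mul _)
    refine hint.mono ((hΦc.comp hmc).mul continuous_id).aestronglyMeasurable ?_
    filter_upwards with w
    rw [Real.norm_eq_abs, Real.norm_eq_abs, abs_mul]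
    refine le_trans ?_ (le_abs_self _)
    have hb := phi_bound hΦ hC (m w)
    have hmw : |m w| = |x| * rexp (c + j) * rexp (σ * w) := by
      rw [hm, abs_mul, abs_of_pos (Real.exp_pos _), hexp w]; ring
    rw [hmw] at hb
    have hrhs : |Φ 0| * (rexp (0 * w) * |w|) + C * (|x| * rexp (c + j)) * (rexp (σ * w) * |w|)
        = (|Φ 0| + C * (|x| * rexp (c + j) * rexp (σ * w))) * |w| := by
      rw [zero_mul, Real.exp_zero]; ring
    rw [hrhs]
    exact mul_le_mul_of_nonneg_right hb (abs_nonneg w)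
  have h2 : Integrable (fun w => deriv Φ (m w) * (x * σ * rexp (c + σ * w + j)))
      (gaussianReal 0 v) := by
    have hint : Integrable (fun w => C * (|x| * |σ| * rexp (c + j)) * rexp (σ * w))
        (gaussianReal 0 v) := (gauss_exp_integrable hv σ).const_mul _
    refine hint.mono ((hdΦc.comp hmc).mul (by fun_prop)).aestronglyMeasurable ?_
    filter_upwards with w
    rw [Real.norm_eq_abs, Real.norm_eq_abs, abs_mul]
    refine le_trans ?_ (le_abs_self _)
    have : |x * σ * rexp (c + σ * w + j)| = |x| * |σ| * rexp (c + j) * rexp (σ * w) := by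
      rw [abs_mul, abs_mul, abs_of_pos (Real.exp_pos _), hexp w]; ring
    rw [this]
    have := mul_le_mul_of_nonneg_right (hC (m w)) (by positivity :
      (0:ℝ) ≤ |x| * |σ| * rexp (c + j) * rexp (σ * w))
    calc |deriv Φ (m w)| * (|x| * |σ| * rexp (c + j) * rexp (σ * w))
        ≤ C * (|x| * |σ| * rexp (c + j) * rexp (σ * w)) := this
      _ = C * (|x| * |σ| * rexp (c + j)) * rexp (σ * w) := by ring
  exact stein hv hg h0 h1 h2


lemma lint_exp_ne_zero {α : Type*} [MeasurableSpace α] (m : Measure α) [IsProbabilityMeasure m]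
    {f : α → ℝ} (hf : Measurable f) :
    ∫⁻ a, ENNReal.ofReal (rexp (f a)) ∂m ≠ 0 := by
  intro h
  rw [lintegral_eq_zero_iff (by measurability)] at h
  obtain ⟨a, ha⟩ := h.exists
  simp only [Pi.zero_apply, ENNReal.ofReal_eq_zero] at ha
  exact absurd ha (not_le.mpr (Real.exp_pos _))

end EDelta

open MeasureTheory ProbabilityTheory Real
open scoped NNReal ENNReal

theorem european_delta
    {Ω : Type*} [MeasurableSpace Ω] (μ : Measure Ω) [IsProbabilityMeasure μ]
    (T r γ σ x : ℝ) (hT : 0 < T) (hσ : σ ≠ 0) (hx : 0 < x)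
    (WT : Ω → ℝ) (XJ : Ω → ℝ) (Xtilde : Ω → ℝ)
    (hdecomp : ∀ ω, Xtilde ω = γ * T + σ * WT ω + XJ ω)
    (hWmeas : Measurable WT) (hJmeas : Measurable XJ)
    (hW : Measure.map WT μ = gaussianReal 0 (Real.toNNReal T))
    (hindep : IndepFun WT XJ μ)
    (hL2 : MemLp (fun ω => Real.exp (Xtilde ω)) 2 μ)
    (Φ : ℝ → ℝ) (hΦ : ContDiff ℝ 1 Φ) (hΦ' : ∃ C, ∀ y, |deriv Φ y| ≤ C) :
    deriv (fun y => ∫ ω, Real.exp (-(r * T)) * Φ (y * Real.exp (Xtilde ω)) ∂μ) x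
      = Real.exp (-(r * T)) / (x * σ * T) *
          ∫ ω, Φ (x * Real.exp (Xtilde ω)) * WT ω ∂μ := by
  classical
  obtain ⟨C, hC⟩ := hΦ'
  have hC0 : 0 ≤ C := le_trans (abs_nonneg _) (hC 0)
  have hΦc : Continuous Φ := hΦ.continuous
  have hdΦc : Continuous (deriv Φ) := hΦ.continuous_deriv le_rfl
  set v : ℝ≥0 := Real.toNNReal T with hvdef
  have hvT : (v : ℝ) = T := Real.coe_toNNReal T hT.le
  have hv : v ≠ 0 := by
    simp only [hvdef, ne_eq, Real.toNNReal_eq_zero, not_le]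
    exact hT
  set c : ℝ := γ * T with hcdef
  have hXt : Xtilde = fun ω => c + σ * WT ω + XJ ω := funext fun ω => hdecomp ω
  have hXmeas : Measurable Xtilde := by rw [hXt]; fun_prop
  have hE1 : Integrable (fun ω => rexp (Xtilde ω)) μ := hL2.integrable (by norm_num)
  set G : Measure ℝ := gaussianReal 0 v with hGdef
  set ρ : Measure ℝ := Measure.map XJ μ with hρdef
  haveI : IsProbabilityMeasure ρ := Measure.isProbabilityMeasure_map hJmeas.aemeasurable
  have hmap : Measure.map (fun ω => (WT ω, XJ ω)) μ = G.prod ρ := by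
    have h := (indepFun_iff_map_prod_eq_prod_map_map hWmeas.aemeasurable
      hJmeas.aemeasurable).mp hindep
    rw [h, hW]
  have hpairmeas : Measurable (fun ω => (WT ω, XJ ω)) := hWmeas.prodMk hJmeas
  -- exp is integrable w.r.t. ρ
  have hJint : Integrable (fun j => rexp j) ρ := by
    have hfin : ∫⁻ ω, ENNReal.ofReal (rexp (Xtilde ω)) ∂μ < ⊤ := by
      have h := hE1.hasFiniteIntegral
      rw [HasFiniteIntegral] at h
      refine lt_of_eq_of_lt ?_ h
      exact lintegral_congr fun ω => by
        rw [← ofReal_norm, Real.norm_eq_abs, abs_of_pos (Real.exp_pos _)]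
    have hsplit : ∫⁻ ω, ENNReal.ofReal (rexp (Xtilde ω)) ∂μ
        = ENNReal.ofReal (rexp c) * ((∫⁻ w, ENNReal.ofReal (rexp (σ * w)) ∂G)
            * ∫⁻ j, ENNReal.ofReal (rexp j) ∂ρ) := by
      have hm1 : Measurable fun z : ℝ × ℝ => ENNReal.ofReal (rexp (σ * z.1)) :=
        (Real.measurable_exp.comp (measurable_fst.const_mul σ)).ennreal_ofReal
      have hm2 : Measurable fun z : ℝ × ℝ => ENNReal.ofReal (rexp z.2) :=
        (Real.measurable_exp.comp measurable_snd).ennreal_ofReal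
      have hm3 : Measurable fun z : ℝ × ℝ => ENNReal.ofReal (rexp c)
          * (ENNReal.ofReal (rexp (σ * z.1)) * ENNReal.ofReal (rexp z.2)) :=
        measurable_const.mul (hm1.mul hm2)
      have h1 : ∫⁻ ω, ENNReal.ofReal (rexp (Xtilde ω)) ∂μ
          = ∫⁻ z : ℝ × ℝ, ENNReal.ofReal (rexp c) * (ENNReal.ofReal (rexp (σ * z.1))
              * ENNReal.ofReal (rexp z.2)) ∂(G.prod ρ) := by
        rw [← hmap, lintegral_map hm3 hpairmeas]
        refine lintegral_congr fun ω => ?_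
        rw [hXt]
        rw [← ENNReal.ofReal_mul (Real.exp_pos _).le,
          ← ENNReal.ofReal_mul (Real.exp_pos _).le, ← Real.exp_add, ← Real.exp_add]
        ring_nf
      rw [h1, lintegral_const_mul _ (f := fun z : ℝ × ℝ => ENNReal.ofReal (rexp (σ * z.1)) * ENNReal.ofReal (rexp z.2)) (hm1.mul hm2)]
      congr 1
      exact lintegral_prod_mul
        ((Real.measurable_exp.comp (measurable_id.const_mul σ)).ennreal_ofReal).aemeasurable
        (Real.measurable_exp.ennreal_ofReal).aemeasurable
    rw [hsplit] at hfin
    have hne1 : ENNReal.ofReal (rexp c) ≠ 0 := by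
      simp [ENNReal.ofReal_eq_zero, not_le, Real.exp_pos]
    have hne2 : (∫⁻ w, ENNReal.ofReal (rexp (σ * w)) ∂G) ≠ 0 := by
      have : ∫⁻ w, ENNReal.ofReal (rexp (σ * w)) ∂G
          = ∫⁻ w, ENNReal.ofReal (rexp ((fun t => σ * t) w)) ∂G := rfl
      rw [this]
      exact EDelta.lint_exp_ne_zero G (by fun_prop)
    have hfin2 : ∫⁻ j, ENNReal.ofReal (rexp j) ∂ρ ≠ ⊤ := by
      intro htop
      rw [htop, ENNReal.mul_top hne2, ENNReal.mul_top hne1] at hfin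
      exact absurd hfin (lt_irrefl _)
    refine ⟨(Real.continuous_exp).aestronglyMeasurable, ?_⟩
    rw [HasFiniteIntegral]
    have : ∀ j : ℝ, ‖rexp j‖ₑ = ENNReal.ofReal (rexp j) := fun j => by
      rw [← ofReal_norm, Real.norm_eq_abs, abs_of_pos (Real.exp_pos _)]
    simp_rw [this]
    exact lt_top_iff_ne_top.mpr hfin2
  -- the two product-side integrands
  set H1 : ℝ × ℝ → ℝ :=
    fun z => deriv Φ (x * rexp (c + σ * z.1 + z.2)) * rexp (c + σ * z.1 + z.2) with hH1def
  set H2 : ℝ × ℝ → ℝ :=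
    fun z => Φ (x * rexp (c + σ * z.1 + z.2)) * z.1 with hH2def
  have hH1c : Continuous H1 := by
    apply Continuous.mul
    · exact hdΦc.comp (by fun_prop)
    · fun_prop
  have hH2c : Continuous H2 := by
    apply Continuous.mul
    · exact hΦc.comp (by fun_prop)
    · fun_prop
  have hexpfac : ∀ w j : ℝ, rexp (c + σ * w + j) = rexp c * (rexp (σ * w) * rexp j) := by
    intro w j
    rw [← Real.exp_add, ← Real.exp_add]
    ring_nf
  have hH1int : Integrable H1 (G.prod ρ) := by
    have hbnd : Integrable (fun z : ℝ × ℝ => (C * rexp c * rexp (σ * z.1)) * rexp z.2)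
        (G.prod ρ) :=
      Integrable.mul_prod ((EDelta.gauss_exp_integrable hv σ).const_mul (C * rexp c)) hJint
    refine hbnd.mono hH1c.aestronglyMeasurable ?_
    filter_upwards with z
    rw [Real.norm_eq_abs, Real.norm_eq_abs, hH1def]
    refine le_trans ?_ (le_abs_self _)
    simp only
    rw [abs_mul, abs_of_pos (Real.exp_pos _)]
    have h := mul_le_mul_of_nonneg_right (hC (x * rexp (c + σ * z.1 + z.2)))
      (Real.exp_pos (c + σ * z.1 + z.2)).le
    calc |deriv Φ (x * rexp (c + σ * z.1 + z.2))| * rexp (c + σ * z.1 + z.2)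
        ≤ C * rexp (c + σ * z.1 + z.2) := h
      _ = C * rexp c * rexp (σ * z.1) * rexp z.2 := by rw [hexpfac z.1 z.2]; ring
  have hH2int : Integrable H2 (G.prod ρ) := by
    have hb1 : Integrable (fun z : ℝ × ℝ => (|Φ 0| * (rexp (0 * z.1) * |z.1|)) * (1 : ℝ))
        (G.prod ρ) :=
      Integrable.mul_prod ((EDelta.gauss_exp_abs_integrable hv 0).const_mul (|Φ 0|))
        (integrable_const 1)
    have hb2 : Integrable
        (fun z : ℝ × ℝ => (C * x * rexp c * (rexp (σ * z.1) * |z.1|)) * rexp z.2) (G.prod ρ) :=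
      Integrable.mul_prod ((EDelta.gauss_exp_abs_integrable hv σ).const_mul (C * x * rexp c))
        hJint
    refine (hb1.add hb2).mono hH2c.aestronglyMeasurable ?_
    filter_upwards with z
    rw [Real.norm_eq_abs, Real.norm_eq_abs, hH2def]
    refine le_trans ?_ (le_abs_self _)
    simp only
    rw [abs_mul]
    have hb := EDelta.phi_bound hΦ hC (x * rexp (c + σ * z.1 + z.2))
    have habs : |x * rexp (c + σ * z.1 + z.2)| = x * rexp (c + σ * z.1 + z.2) := by
      rw [abs_of_pos (by positivity)]
    rw [habs] at hb
    calc |Φ (x * rexp (c + σ * z.1 + z.2))| * |z.1|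
        ≤ (|Φ 0| + C * (x * rexp (c + σ * z.1 + z.2))) * |z.1| :=
          mul_le_mul_of_nonneg_right hb (abs_nonneg _)
      _ = |Φ 0| * (rexp (0 * z.1) * |z.1|) * 1
          + C * x * rexp c * (rexp (σ * z.1) * |z.1|) * rexp z.2 := by
          rw [hexpfac z.1 z.2, zero_mul, Real.exp_zero]; ring
  -- Fubini for the two integrals
  have hA : ∫ ω, deriv Φ (x * rexp (Xtilde ω)) * rexp (Xtilde ω) ∂μ
      = ∫ j, ∫ w, H1 (w, j) ∂G ∂ρ := by
    have h1 : ∫ ω, deriv Φ (x * rexp (Xtilde ω)) * rexp (Xtilde ω) ∂μ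
        = ∫ ω, H1 (WT ω, XJ ω) ∂μ := by rw [hXt]
    rw [h1, ← integral_map hpairmeas.aemeasurable hH1c.aestronglyMeasurable, hmap]
    exact integral_prod_symm H1 hH1int
  have hB : ∫ ω, Φ (x * rexp (Xtilde ω)) * WT ω ∂μ = ∫ j, ∫ w, H2 (w, j) ∂G ∂ρ := by
    have h1 : ∫ ω, Φ (x * rexp (Xtilde ω)) * WT ω ∂μ = ∫ ω, H2 (WT ω, XJ ω) ∂μ := by rw [hXt]
    rw [h1, ← integral_map hpairmeas.aemeasurable hH2c.aestronglyMeasurable, hmap]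
    exact integral_prod_symm H2 hH2int
  -- Stein identity per j
  have hstein : ∀ j : ℝ, ∫ w, H2 (w, j) ∂G = T * (x * σ) * ∫ w, H1 (w, j) ∂G := by
    intro j
    have h := EDelta.key_stein hv hΦ hC x σ c j
    have h2 : (fun w => deriv Φ (x * rexp (c + σ * w + j)) * (x * σ * rexp (c + σ * w + j)))
        = fun w => (x * σ) * H1 (w, j) := by
      funext w
      rw [hH1def]
      ring
    rw [h2, integral_const_mul] at h
    rw [hH2def]
    simp only
    rw [h, hvT]
    ring
  have hBA : ∫ ω, Φ (x * rexp (Xtilde ω)) * WT ω ∂μ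
      = T * (x * σ) * ∫ ω, deriv Φ (x * rexp (Xtilde ω)) * rexp (Xtilde ω) ∂μ := by
    rw [hB, hA]
    calc ∫ j, ∫ w, H2 (w, j) ∂G ∂ρ
        = ∫ j, T * (x * σ) * ∫ w, H1 (w, j) ∂G ∂ρ := by
          congr 1; funext j; exact hstein j
      _ = T * (x * σ) * ∫ j, ∫ w, H1 (w, j) ∂G ∂ρ := integral_const_mul _ _
  -- differentiation under the integral sign
  have hmain : HasDerivAt (fun y => ∫ ω, rexp (-(r * T)) * Φ (y * rexp (Xtilde ω)) ∂μ)
      (∫ ω, rexp (-(r * T)) * (deriv Φ (x * rexp (Xtilde ω)) * rexp (Xtilde ω)) ∂μ) x := by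
    have hres := hasDerivAt_integral_of_dominated_loc_of_deriv_le (μ := μ)
      (F := fun y ω => rexp (-(r * T)) * Φ (y * rexp (Xtilde ω)))
      (F' := fun y ω => rexp (-(r * T)) * (deriv Φ (y * rexp (Xtilde ω)) * rexp (Xtilde ω)))
      (x₀ := x) (bound := fun ω => (rexp (-(r * T)) * C) * rexp (Xtilde ω))
      (s := Metric.ball x 1) (Metric.ball_mem_nhds x one_pos) ?_ ?_ ?_ ?_ ?_ ?_
    · exact hres.2
    · filter_upwards with y
      exact ((continuous_const.mul (hΦc.comp (continuous_const.mul
        continuous_exp))).measurable.comp hXmeas).aestronglyMeasurable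
    · have hbnd : Integrable (fun ω => rexp (-(r * T)) * (|Φ 0| + C * x * rexp (Xtilde ω))) μ :=
        (((integrable_const (|Φ 0|)).add (hE1.const_mul (C * x))).const_mul (rexp (-(r * T))))
      refine hbnd.mono (((continuous_const.mul (hΦc.comp (continuous_const.mul
        continuous_exp))).measurable.comp hXmeas).aestronglyMeasurable) ?_
      filter_upwards with ω
      rw [Real.norm_eq_abs, Real.norm_eq_abs]
      refine le_trans ?_ (le_abs_self _)
      rw [abs_mul, abs_of_pos (Real.exp_pos _)]
      have hb := EDelta.phi_bound hΦ hC (x * rexp (Xtilde ω))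
      have habs : |x * rexp (Xtilde ω)| = x * rexp (Xtilde ω) := abs_of_pos (by positivity)
      rw [habs] at hb
      have := mul_le_mul_of_nonneg_left hb (Real.exp_pos (-(r * T))).le
      calc rexp (-(r * T)) * |Φ (x * rexp (Xtilde ω))|
          ≤ rexp (-(r * T)) * (|Φ 0| + C * (x * rexp (Xtilde ω))) := this
        _ = rexp (-(r * T)) * (|Φ 0| + C * x * rexp (Xtilde ω)) := by ring
    · exact ((continuous_const.mul ((hdΦc.comp (continuous_const.mul
        continuous_exp)).mul continuous_exp)).measurable.comp hXmeas).aestronglyMeasurable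
    · filter_upwards with ω
      intro y _
      rw [Real.norm_eq_abs, abs_mul, abs_mul, abs_of_pos (Real.exp_pos (-(r * T))),
        abs_of_pos (Real.exp_pos (Xtilde ω))]
      have := mul_le_mul_of_nonneg_right (hC (y * rexp (Xtilde ω)))
        (Real.exp_pos (Xtilde ω)).le
      calc rexp (-(r * T)) * (|deriv Φ (y * rexp (Xtilde ω))| * rexp (Xtilde ω))
          ≤ rexp (-(r * T)) * (C * rexp (Xtilde ω)) := by
            exact mul_le_mul_of_nonneg_left this (Real.exp_pos _).le
        _ = rexp (-(r * T)) * C * rexp (Xtilde ω) := by ring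
    · exact hE1.const_mul (rexp (-(r * T)) * C)
    · filter_upwards with ω
      intro y _
      have hinner : HasDerivAt (fun y : ℝ => y * rexp (Xtilde ω)) (rexp (Xtilde ω)) y :=
        hasDerivAt_mul_const _
      have hcomp : HasDerivAt (fun y : ℝ => Φ (y * rexp (Xtilde ω)))
          (deriv Φ (y * rexp (Xtilde ω)) * rexp (Xtilde ω)) y :=
        ((hΦ.differentiable one_ne_zero (y * rexp (Xtilde ω))).hasDerivAt).comp y hinner
      exact hcomp.const_mul (rexp (-(r * T)))
  rw [hmain.deriv]
  have hpull : ∫ ω, rexp (-(r * T)) * (deriv Φ (x * rexp (Xtilde ω)) * rexp (Xtilde ω)) ∂μ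
      = rexp (-(r * T)) * ∫ ω, deriv Φ (x * rexp (Xtilde ω)) * rexp (Xtilde ω) ∂μ :=
    integral_const_mul _ _
  rw [hpull, hBA]
  have hTne : T ≠ 0 := hT.ne'
  have hxne : x ≠ 0 := hx.ne'
  field_simp
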